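/- arXiv:2011.02288 — 3 statements merged into one kernel-verified Lean document; each statement's English description precedes it below -/
import Mathlib

section
/- For every even integer b ≥ 2 and every integer m with 0 ≤ m ≤ b, the number of ±1-step walks of length b starting at 0 whose maximum attained position equals m is given by f(m,b) = C(b, b/2 + (−1)^m · ⌈m/2⌉), where C(n,k) denotes the binomial coefficient. -/
/-- The value of a ±1 step: `true` is a rightward step (+1), `false` a leftward step (−1). -/
def stepVal (x : Bool) : ℤ := if x then 1 else -1

/-- The position after `k` steps (partial sum `S_k`) of the walk with steps `ε`. -/
def partialSum {b : ℕ} (ε : Fin b → Bool) (k : ℕ) : ℤ :=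
  ∑ i : Fin b, if (i : ℕ) < k then stepVal (ε i) else 0

/-- The maximum attained position `max { S_k : 0 ≤ k ≤ b }` of the walk with steps `ε`,
started at 0. -/
def walkMax {b : ℕ} (ε : Fin b → Bool) : ℤ :=
  (Finset.range (b + 1)).sup' Finset.nonempty_range_add_one (partialSum ε)

/-- `f m b` : the number of ±1-step walks of length `b` starting at 0 whose maximum
attained position equals `m`. -/
def f (m : ℤ) (b : ℕ) : ℕ :=
  (Finset.univ.filter (fun ε : Fin b → Bool => walkMax ε = m)).card


lemma stepVal_not (x : Bool) : stepVal (!x) = - stepVal x := by cases x <;> simp [stepVal]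

lemma stepVal_le (x : Bool) : stepVal x ≤ 1 := by cases x <;> simp [stepVal]

lemma partialSum_zero {b : ℕ} (ε : Fin b → Bool) : partialSum ε 0 = 0 := by
  simp [partialSum]

lemma partialSum_succ {b : ℕ} (ε : Fin b → Bool) {k : ℕ} (hk : k < b) :
    partialSum ε (k+1) = partialSum ε k + stepVal (ε ⟨k, hk⟩) := by
  unfold partialSum
  have h : ∀ i : Fin b, (if (i:ℕ) < k+1 then stepVal (ε i) else 0)
      = (if (i:ℕ) < k then stepVal (ε i) else 0) + (if i = ⟨k,hk⟩ then stepVal (ε i) else 0) := by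
    intro i
    rcases eq_or_ne i ⟨k, hk⟩ with h | h
    · subst h; simp
    · have hne : (i:ℕ) ≠ k := fun hh => h (Fin.ext hh)
      rw [if_neg h]
      split_ifs <;> omega
  rw [Finset.sum_congr rfl (fun i _ => h i), Finset.sum_add_distrib,
    Finset.sum_ite_eq' Finset.univ (⟨k, hk⟩ : Fin b)]
  simp

lemma partialSum_stable {b : ℕ} (ε : Fin b → Bool) {k : ℕ} (hk : b ≤ k) :
    partialSum ε k = partialSum ε b := by
  unfold partialSum
  refine Finset.sum_congr rfl fun i _ => ?_
  rw [if_pos (by omega), if_pos i.isLt]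

lemma partialSum_succ_le {b : ℕ} (ε : Fin b → Bool) (k : ℕ) :
    partialSum ε (k+1) ≤ partialSum ε k + 1 := by
  rcases lt_or_ge k b with h | h
  · rw [partialSum_succ ε h]; have := stepVal_le (ε ⟨k, h⟩); omega
  · rw [partialSum_stable ε (by omega), partialSum_stable ε h]; omega

lemma exists_hit {b : ℕ} (ε : Fin b → Bool) (m : ℤ) (hm : 0 ≤ m) :
    ∀ n, m ≤ partialSum ε n → ∃ k ≤ n, partialSum ε k = m := by
  intro n
  induction n with
  | zero =>
    intro h
    refine ⟨0, le_refl _, ?_⟩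
    have := partialSum_zero ε; omega
  | succ n ih =>
    intro h
    rcases le_or_gt m (partialSum ε n) with h2 | h2
    · obtain ⟨k, hk, hk2⟩ := ih h2
      exact ⟨k, by omega, hk2⟩
    · have := partialSum_succ_le ε n
      exact ⟨n+1, le_refl _, by omega⟩

open Classical in
noncomputable def tauH (m : ℤ) {b : ℕ} (ε : Fin b → Bool) : ℕ :=
  if h : ∃ k, partialSum ε k = m then Nat.find h else 0

noncomputable def reflect (m : ℤ) {b : ℕ} (ε : Fin b → Bool) : Fin b → Bool :=
  fun i => if (i:ℕ) < tauH m ε then ε i else !(ε i)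

section tau
variable {b : ℕ} {ε : Fin b → Bool} {m : ℤ}

lemma tau_spec (h : ∃ k, partialSum ε k = m) : partialSum ε (tauH m ε) = m := by
  unfold tauH
  rw [dif_pos h]
  exact Nat.find_spec h

lemma tau_min (h : ∃ k, partialSum ε k = m) {k : ℕ} (hk : k < tauH m ε) :
    partialSum ε k ≠ m := by
  unfold tauH at hk
  rw [dif_pos h] at hk
  exact Nat.find_min h hk

lemma tau_le {k : ℕ} (hk : partialSum ε k = m) : tauH m ε ≤ k := by
  unfold tauH
  rw [dif_pos ⟨k, hk⟩]
  exact Nat.find_le hk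

end tau

lemma stepVal_not' (x : Bool) : stepVal (!x) = - stepVal x := by cases x <;> simp [stepVal]

lemma reflect_partialSum_le {b : ℕ} (ε : Fin b → Bool) (m : ℤ) {k : ℕ} (hk : k ≤ tauH m ε) :
    partialSum (reflect m ε) k = partialSum ε k := by
  unfold partialSum
  refine Finset.sum_congr rfl fun i _ => ?_
  by_cases h : (i:ℕ) < k
  · rw [if_pos h, if_pos h]
    have : reflect m ε i = ε i := by
      unfold reflect; rw [if_pos (by omega)]
    rw [this]
  · rw [if_neg h, if_neg h]

lemma reflect_partialSum_ge {b : ℕ} (ε : Fin b → Bool) (m : ℤ)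
    (h : ∃ k, partialSum ε k = m) {k : ℕ} (hk : tauH m ε ≤ k) :
    partialSum (reflect m ε) k = 2 * m - partialSum ε k := by
  have key : partialSum (reflect m ε) k + partialSum ε k = 2 * partialSum ε (tauH m ε) := by
    unfold partialSum
    rw [← Finset.sum_add_distrib, Finset.mul_sum]
    refine Finset.sum_congr rfl fun i _ => ?_
    by_cases h1 : (i:ℕ) < tauH m ε
    · rw [if_pos h1, if_pos (by omega), if_pos (by omega)]
      have : reflect m ε i = ε i := by unfold reflect; rw [if_pos h1]
      rw [this]; ring
    · rw [if_neg h1]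
      by_cases h2 : (i:ℕ) < k
      · rw [if_pos h2, if_pos h2]
        have : reflect m ε i = !(ε i) := by unfold reflect; rw [if_neg h1]
        rw [this, stepVal_not']; ring
      · rw [if_neg h2, if_neg h2]; ring
  rw [tau_spec h] at key
  omega

lemma reflect_hits {b : ℕ} (ε : Fin b → Bool) (m : ℤ) (h : ∃ k, partialSum ε k = m) :
    partialSum (reflect m ε) (tauH m ε) = m := by
  rw [reflect_partialSum_le ε m (le_refl _), tau_spec h]

lemma tau_reflect {b : ℕ} (ε : Fin b → Bool) (m : ℤ) (h : ∃ k, partialSum ε k = m) :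
    tauH m (reflect m ε) = tauH m ε := by
  have h2 : partialSum (reflect m ε) (tauH m ε) = m := reflect_hits ε m h
  refine le_antisymm (tau_le h2) ?_
  by_contra hlt
  push_neg at hlt
  have h3 := tau_spec (⟨_, h2⟩ : ∃ k, partialSum (reflect m ε) k = m)
  rw [reflect_partialSum_le ε m (by omega)] at h3
  exact tau_min h hlt h3

lemma reflect_reflect {b : ℕ} (ε : Fin b → Bool) (m : ℤ) (h : ∃ k, partialSum ε k = m) :
    reflect m (reflect m ε) = ε := by
  have ht := tau_reflect ε m h
  funext i
  simp only [reflect, ht]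
  by_cases h1 : (i:ℕ) < tauH m ε
  · rw [if_pos h1, if_pos h1]
  · rw [if_neg h1, if_neg h1, Bool.not_not]

lemma max_of_hit {b : ℕ} {ε : Fin b → Bool} {m : ℤ} {k : ℕ} (hk : k ≤ b)
    (h : m ≤ partialSum ε k) : m ≤ walkMax ε :=
  le_trans h (Finset.le_sup' _ (Finset.mem_range.mpr (by omega)))

lemma hit_of_max {b : ℕ} {ε : Fin b → Bool} {m : ℤ} (hm : 0 ≤ m)
    (h : m ≤ walkMax ε) : ∃ k ≤ b, partialSum ε k = m := by
  obtain ⟨k, hk, hk2⟩ := Finset.le_sup'_iff (Finset.nonempty_range_add_one) |>.mp h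
  obtain ⟨k', hk', hk2'⟩ := exists_hit ε m hm k hk2
  exact ⟨k', by have := Finset.mem_range.mp hk; omega, hk2'⟩

lemma card_reflect (b : ℕ) (m : ℤ) (hm : 0 ≤ m) :
    (Finset.univ.filter fun ε : Fin b → Bool => m ≤ walkMax ε ∧ partialSum ε b < m).card
    = (Finset.univ.filter fun ε : Fin b → Bool => m + 1 ≤ partialSum ε b).card := by
  refine Finset.card_bij' (fun ε _ => reflect m ε) (fun ε _ => reflect m ε) ?_ ?_ ?_ ?_
  · intro ε hε
    rw [Finset.mem_filter] at hε ⊢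
    obtain ⟨-, hmax, hend⟩ := hε
    obtain ⟨k, hkb, hkm⟩ := hit_of_max hm hmax
    have hhit : ∃ k, partialSum ε k = m := ⟨k, hkm⟩
    have htau : tauH m ε ≤ b := le_trans (tau_le hkm) hkb
    refine ⟨Finset.mem_univ _, ?_⟩
    rw [reflect_partialSum_ge ε m hhit htau]
    omega
  · intro ε hε
    rw [Finset.mem_filter] at hε ⊢
    obtain ⟨-, hend⟩ := hε
    obtain ⟨k, hkb, hkm⟩ := exists_hit ε m hm b (by omega)
    have hhit : ∃ k, partialSum ε k = m := ⟨k, hkm⟩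
    have htau : tauH m ε ≤ b := le_trans (tau_le hkm) hkb
    refine ⟨Finset.mem_univ _, ?_, ?_⟩
    · exact max_of_hit htau (le_of_eq (reflect_hits ε m hhit).symm)
    · rw [reflect_partialSum_ge ε m hhit htau]; omega
  · intro ε hε
    rw [Finset.mem_filter] at hε
    obtain ⟨-, hmax, -⟩ := hε
    obtain ⟨k, hkb, hkm⟩ := hit_of_max hm hmax
    exact reflect_reflect ε m ⟨k, hkm⟩
  · intro ε hε
    rw [Finset.mem_filter] at hε
    obtain ⟨-, hend⟩ := hε
    obtain ⟨k, hkb, hkm⟩ := exists_hit ε m hm b (by omega)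
    exact reflect_reflect ε m ⟨k, hkm⟩

lemma card_A (b : ℕ) (m : ℤ) (hm : 0 ≤ m) :
    (Finset.univ.filter fun ε : Fin b → Bool => m ≤ walkMax ε).card
    = (Finset.univ.filter fun ε : Fin b → Bool => m ≤ partialSum ε b).card
      + (Finset.univ.filter fun ε : Fin b → Bool => m + 1 ≤ partialSum ε b).card := by
  classical
  have hsplit := Finset.card_filter_add_card_filter_not
    (s := Finset.univ.filter fun ε : Fin b → Bool => m ≤ walkMax ε)
    (p := fun ε => m ≤ partialSum ε b)
  have h1 : (Finset.univ.filter fun ε : Fin b → Bool => m ≤ walkMax ε).filter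
      (fun ε => m ≤ partialSum ε b) = Finset.univ.filter fun ε : Fin b → Bool => m ≤ partialSum ε b := by
    rw [Finset.filter_filter]
    apply Finset.filter_congr
    intro ε _
    constructor
    · exact fun h => h.2
    · exact fun h => ⟨max_of_hit (le_refl b) h, h⟩
  have h2 : (Finset.univ.filter fun ε : Fin b → Bool => m ≤ walkMax ε).filter
      (fun ε => ¬ m ≤ partialSum ε b)
      = Finset.univ.filter fun ε : Fin b → Bool => m ≤ walkMax ε ∧ partialSum ε b < m := by
    rw [Finset.filter_filter]
    apply Finset.filter_congr
    intro ε _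
    omega
  rw [h1, h2, card_reflect b m hm] at hsplit
  omega

lemma ege_split (b : ℕ) (j : ℤ) :
    (Finset.univ.filter fun ε : Fin b → Bool => j ≤ partialSum ε b).card
    = (Finset.univ.filter fun ε : Fin b → Bool => partialSum ε b = j).card
      + (Finset.univ.filter fun ε : Fin b → Bool => j + 1 ≤ partialSum ε b).card := by
  classical
  have hsplit := Finset.card_filter_add_card_filter_not
    (s := Finset.univ.filter fun ε : Fin b → Bool => j ≤ partialSum ε b)
    (p := fun ε => partialSum ε b = j)
  have h1 : (Finset.univ.filter fun ε : Fin b → Bool => j ≤ partialSum ε b).filter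
      (fun ε => partialSum ε b = j)
      = Finset.univ.filter fun ε : Fin b → Bool => partialSum ε b = j := by
    rw [Finset.filter_filter]
    apply Finset.filter_congr
    intro ε _
    omega
  have h2 : (Finset.univ.filter fun ε : Fin b → Bool => j ≤ partialSum ε b).filter
      (fun ε => ¬ partialSum ε b = j)
      = Finset.univ.filter fun ε : Fin b → Bool => j + 1 ≤ partialSum ε b := by
    rw [Finset.filter_filter]
    apply Finset.filter_congr
    intro ε _
    omega
  rw [h1, h2] at hsplit
  omega

lemma f_eq_N (b : ℕ) (m : ℤ) (hm : 0 ≤ m) :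
    f m b = (Finset.univ.filter fun ε : Fin b → Bool => partialSum ε b = m).card
      + (Finset.univ.filter fun ε : Fin b → Bool => partialSum ε b = m + 1).card := by
  classical
  have hsub : (Finset.univ.filter fun ε : Fin b → Bool => m + 1 ≤ walkMax ε)
      ⊆ (Finset.univ.filter fun ε : Fin b → Bool => m ≤ walkMax ε) := by
    intro ε hε
    rw [Finset.mem_filter] at hε ⊢
    exact ⟨hε.1, by omega⟩
  have hset : (Finset.univ.filter fun ε : Fin b → Bool => walkMax ε = m)
      = (Finset.univ.filter fun ε : Fin b → Bool => m ≤ walkMax ε)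
        \ (Finset.univ.filter fun ε : Fin b → Bool => m + 1 ≤ walkMax ε) := by
    ext ε
    simp only [Finset.mem_filter, Finset.mem_sdiff, Finset.mem_univ, true_and]
    omega
  have hcard : f m b = (Finset.univ.filter fun ε : Fin b → Bool => m ≤ walkMax ε).card
      - (Finset.univ.filter fun ε : Fin b → Bool => m + 1 ≤ walkMax ε).card := by
    rw [f, hset, Finset.card_sdiff_of_subset hsub]
  have hA1 := card_A b m hm
  have hA2 := card_A b (m+1) (by omega)
  have hE1 := ege_split b m
  have hE2 := ege_split b (m+1)
  have hmono := Finset.card_le_card hsub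
  omega

lemma partialSum_full {b : ℕ} (ε : Fin b → Bool) :
    partialSum ε b = 2 * ((Finset.univ.filter fun i => ε i = true).card : ℤ) - b := by
  unfold partialSum
  have h : ∀ i : Fin b, (if (i:ℕ) < b then stepVal (ε i) else 0)
      = (if ε i = true then (2:ℤ) else 0) - 1 := by
    intro i
    rw [if_pos i.isLt]
    cases hi : ε i <;> simp [stepVal]
  rw [Finset.sum_congr rfl (fun i _ => h i), Finset.sum_sub_distrib]
  have h2 : ∀ i : Fin b, (if ε i = true then (2:ℤ) else 0) = 2 * (if ε i = true then (1:ℤ) else 0) := by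
    intro i; split_ifs <;> ring
  rw [Finset.sum_congr rfl (fun i _ => h2 i), ← Finset.mul_sum, Finset.sum_boole]
  simp

lemma card_count (b k : ℕ) :
    (Finset.univ.filter fun ε : Fin b → Bool =>
      (Finset.univ.filter fun i => ε i = true).card = k).card = b.choose k := by
  classical
  have : (Finset.univ.filter fun ε : Fin b → Bool =>
      (Finset.univ.filter fun i => ε i = true).card = k).card
      = (Finset.powersetCard k (Finset.univ : Finset (Fin b))).card := by
    refine Finset.card_bij' (fun ε _ => Finset.univ.filter fun i => ε i = true)
      (fun s _ => fun i => decide (i ∈ s)) ?_ ?_ ?_ ?_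
    · intro ε hε
      rw [Finset.mem_filter] at hε
      rw [Finset.mem_powersetCard]
      exact ⟨Finset.filter_subset _ _ |>.trans (by simp), hε.2⟩
    · intro s hs
      rw [Finset.mem_powersetCard] at hs
      rw [Finset.mem_filter]
      refine ⟨Finset.mem_univ _, ?_⟩
      have : (Finset.univ.filter fun i => decide (i ∈ s) = true) = s := by
        ext i; simp
      rw [this, hs.2]
    · intro ε hε
      funext i
      simp
    · intro s hs
      ext i
      simp
  rw [this, Finset.card_powersetCard, Finset.card_univ, Fintype.card_fin]

lemma N_eq_choose (b k : ℕ) (_hk : k ≤ b) :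
    (Finset.univ.filter fun ε : Fin b → Bool => partialSum ε b = 2*(k:ℤ) - b).card
    = b.choose k := by
  rw [← card_count b k]
  congr 1
  apply Finset.filter_congr
  intro ε _
  rw [partialSum_full]
  constructor
  · intro h; omega
  · intro h; omega

lemma N_eq_zero (b : ℕ) (j : ℤ) (hpar : ¬ Even (j + b)) :
    (Finset.univ.filter fun ε : Fin b → Bool => partialSum ε b = j).card = 0 := by
  rw [Finset.card_eq_zero, Finset.filter_eq_empty_iff]
  intro ε _
  rw [partialSum_full]
  intro h
  apply hpar
  exact ⟨((Finset.univ.filter fun i => ε i = true).card : ℤ), by omega⟩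


/-- Proposition 2 (even case): for even `b ≥ 2` and `0 ≤ m ≤ b`,
`f(m, b) = C(b, b/2 + (−1)^m ⌈m/2⌉)`. -/
theorem f_closed_form_even (b : ℕ) (hb : 2 ≤ b) (hbe : Even b)
    (m : ℤ) (hm0 : 0 ≤ m) (hmb : m ≤ (b : ℤ)) :
    (f m b : ℤ) = Nat.choose b (((b : ℤ) / 2 + (m.negOnePow : ℤ) * ⌈(m : ℚ) / 2⌉).toNat) := by
  obtain ⟨c, hc⟩ := hbe
  have hbc : b = 2 * c := by omega
  have hmain := f_eq_N b m hm0
  rcases Int.even_or_odd m with ⟨d, hd⟩ | ⟨d, hd⟩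
  · -- m even, m = 2d
    have hd0 : 0 ≤ d := by omega
    have hdc : d ≤ c := by omega
    have hN1 : (Finset.univ.filter fun ε : Fin b → Bool => partialSum ε b = m + 1).card = 0 := by
      apply N_eq_zero
      intro ⟨t, ht⟩
      omega
    have hN0 : (Finset.univ.filter fun ε : Fin b → Bool => partialSum ε b = m).card
        = b.choose (c + d.toNat) := by
      have hmeq : m = 2 * ((c + d.toNat : ℕ) : ℤ) - (b : ℤ) := by push_cast; omega
      rw [hmeq]
      exact N_eq_choose b (c + d.toNat) (by omega)
    have hsign : (m.negOnePow : ℤ) = 1 := by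
      rw [Int.negOnePow_even m ⟨d, hd⟩]
      rfl
    have hceil : ⌈(m : ℚ) / 2⌉ = d := by
      have : (m : ℚ) / 2 = (d : ℤ) := by
        rw [hd]; push_cast; ring
      rw [this, Int.ceil_intCast]
    rw [hsign, hceil, hmain]
    have harg : ((b:ℤ)/2 + 1 * d).toNat = c + d.toNat := by omega
    rw [harg]
    push_cast [hN0, hN1]
    ring
  · -- m odd, m = 2d + 1
    have hd0 : 0 ≤ d := by omega
    have hdc : d + 1 ≤ c := by omega
    have hN0 : (Finset.univ.filter fun ε : Fin b → Bool => partialSum ε b = m).card = 0 := by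
      apply N_eq_zero
      intro ⟨t, ht⟩
      omega
    have hN1 : (Finset.univ.filter fun ε : Fin b → Bool => partialSum ε b = m + 1).card
        = b.choose (c + d.toNat + 1) := by
      have hmeq : m + 1 = 2 * ((c + d.toNat + 1 : ℕ) : ℤ) - (b : ℤ) := by push_cast; omega
      rw [hmeq]
      exact N_eq_choose b (c + d.toNat + 1) (by omega)
    have hsign : (m.negOnePow : ℤ) = -1 := by
      rw [Int.negOnePow_odd m ⟨d, hd⟩]
      rfl
    have hceil : ⌈(m : ℚ) / 2⌉ = d + 1 := by
      rw [Int.ceil_eq_iff]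
      constructor
      · push_cast
        rw [hd]
        push_cast
        linarith
      · push_cast
        rw [hd]
        push_cast
        linarith
    rw [hsign, hceil, hmain]
    have harg : ((b:ℤ)/2 + (-1) * (d + 1)).toNat = c - (d.toNat + 1) := by omega
    rw [harg]
    have hsymm : b.choose (c - (d.toNat + 1)) = b.choose (c + d.toNat + 1) := by
      have hle : c + d.toNat + 1 ≤ b := by omega
      have heq : b - (c + d.toNat + 1) = c - (d.toNat + 1) := by omega
      rw [← heq, Nat.choose_symm hle]
    rw [hsymm]
    push_cast [hN0, hN1]
    ring
end

section
/- For every odd integer b ≥ 1 and every integer m with 0 ≤ m ≤ b, the number of ±1-step walks of length b starting at 0 whose maximum attained position equals m is given by f(m,b) = C(b, (b−1)/2 + (−1)^{m−1} · ⌈m/2⌉), where C(n,k) denotes the binomial coefficient. -/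
lemma partialSum_cons {b : ℕ} (x : Bool) (ε : Fin b → Bool) (k : ℕ) :
    partialSum (Fin.cons x ε) (k + 1) = stepVal x + partialSum ε k := by
  rw [partialSum, partialSum, Fin.sum_univ_succ]
  congr 1
  · simp

lemma le_walkMax {b : ℕ} (ε : Fin b → Bool) {k : ℕ} (hk : k ≤ b) :
    partialSum ε k ≤ walkMax ε :=
  Finset.le_sup' _ (Finset.mem_range.mpr (by omega))

lemma walkMax_nonneg {b : ℕ} (ε : Fin b → Bool) : 0 ≤ walkMax ε := by
  have := le_walkMax ε (k := 0) (Nat.zero_le b)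
  rwa [partialSum_zero] at this

lemma walkMax_cons {b : ℕ} (x : Bool) (ε : Fin b → Bool) :
    walkMax (Fin.cons x ε) = max 0 (stepVal x + walkMax ε) := by
  apply le_antisymm
  · apply Finset.sup'_le
    intro k hk
    rw [Finset.mem_range] at hk
    match k with
    | 0 =>
      rw [partialSum_zero]
      exact le_max_left _ _
    | k + 1 =>
      rw [partialSum_cons]
      exact le_max_of_le_right (by
        have := le_walkMax ε (k := k) (by omega)
        omega)
  · rw [max_le_iff]
    constructor
    · have := le_walkMax (Fin.cons x ε) (k := 0) (Nat.zero_le _)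
      rwa [partialSum_zero] at this
    · obtain ⟨j, hj, hEq⟩ := Finset.exists_mem_eq_sup' (Finset.nonempty_range_add_one (n := b))
        (partialSum ε)
      rw [Finset.mem_range] at hj
      have h2 := le_walkMax (Fin.cons x ε) (k := j + 1) (by omega)
      rw [partialSum_cons] at h2
      rw [walkMax, hEq]
      exact h2

lemma f_cons (b : ℕ) (m : ℤ) :
    f m (b + 1) =
      (Finset.univ.filter (fun ε : Fin b → Bool => walkMax ε + 1 = m)).card +
      (Finset.univ.filter (fun ε : Fin b → Bool => max 0 (walkMax ε - 1) = m)).card := by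
  classical
  rw [f, Finset.card_filter,
    ← Equiv.sum_comp (Fin.consEquiv (fun _ => Bool))
      (fun ε : Fin (b+1) → Bool => if walkMax ε = m then (1:ℕ) else 0),
    Fintype.sum_prod_type, Fintype.sum_bool]
  congr 1
  · rw [Finset.card_filter]
    refine Finset.sum_congr rfl fun ε _ => ?_
    have h : (Fin.consEquiv (fun _ => Bool)) (true, ε) = Fin.cons true ε := rfl
    rw [h, walkMax_cons]
    have hn := walkMax_nonneg ε
    have : max 0 (stepVal true + walkMax ε) = walkMax ε + 1 := by
      have hs : stepVal true = 1 := rfl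
      rw [hs]; omega
    rw [this]
  · rw [Finset.card_filter]
    refine Finset.sum_congr rfl fun ε _ => ?_
    have h : (Fin.consEquiv (fun _ => Bool)) (false, ε) = Fin.cons false ε := rfl
    rw [h, walkMax_cons]
    have : max 0 (stepVal false + walkMax ε) = max 0 (walkMax ε - 1) := by
      have hs : stepVal false = -1 := rfl
      rw [hs]; omega
    rw [this]

lemma f_succ (b : ℕ) (m : ℤ) (hm : 1 ≤ m) :
    f m (b + 1) = f (m - 1) b + f (m + 1) b := by
  rw [f_cons, f, f]
  congr 1
  · apply congrArg
    apply Finset.filter_congr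
    intro ε _
    omega
  · apply congrArg
    apply Finset.filter_congr
    intro ε _
    have := walkMax_nonneg ε
    omega

lemma f_zero_succ (b : ℕ) : f 0 (b + 1) = f 0 b + f 1 b := by
  classical
  rw [f_cons]
  have h1 : (Finset.univ.filter (fun ε : Fin b → Bool => walkMax ε + 1 = (0:ℤ))).card = 0 := by
    rw [Finset.card_eq_zero, Finset.filter_eq_empty_iff]
    intro ε _
    have := walkMax_nonneg ε
    omega
  rw [h1, zero_add]
  have h2 : (Finset.univ.filter (fun ε : Fin b → Bool => max 0 (walkMax ε - 1) = (0:ℤ)))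
      = Finset.univ.filter (fun ε : Fin b → Bool => walkMax ε = 0 ∨ walkMax ε = 1) := by
    apply Finset.filter_congr
    intro ε _
    have := walkMax_nonneg ε
    omega
  rw [h2, Finset.filter_or, Finset.card_union_of_disjoint, f, f]
  rw [Finset.disjoint_left]
  intro ε h0 h1'
  simp only [Finset.mem_filter] at h0 h1'
  omega

lemma f_formula (b n : ℕ) : f (n : ℤ) b = b.choose ((b + n + 1) / 2) := by
  induction b generalizing n with
  | zero =>
    match n with
    | 0 =>
      rw [f]
      have : ∀ ε : Fin 0 → Bool, walkMax ε = 0 := by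
        intro ε
        rw [walkMax]
        simp [partialSum]
      simp [this]
    | n + 1 =>
      have h1 : f ((n:ℕ) + 1 : ℕ) 0 = 0 := by
        rw [f, Finset.card_eq_zero, Finset.filter_eq_empty_iff]
        intro ε _
        rw [walkMax]
        simp [partialSum]
        omega
      rw [h1, Nat.choose_eq_zero_of_lt (by omega)]
  | succ b ih =>
    match n with
    | 0 =>
      rw [Nat.cast_zero, f_zero_succ]
      have e1 := ih 0
      have e2 := ih 1
      norm_num at e1 e2
      rw [e1, e2]
      rcases Nat.even_or_odd b with ⟨c, hc⟩ | ⟨c, hc⟩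
      · subst hc
        have i1 : (c + c + 1) / 2 = c := by omega
        have i2 : (c + c + 2) / 2 = c + 1 := by omega
        have i3 : (c + c + 1 + 0 + 1) / 2 = c + 1 := by omega
        rw [i1, i2]
        exact (Nat.choose_succ_succ (c + c) c).symm
      · subst hc
        have i1 : (2 * c + 1 + 1) / 2 = c + 1 := by omega
        have i2 : (2 * c + 1 + 2) / 2 = c + 1 := by omega
        rw [i1, i2]
        have hsym : (2 * c + 1).choose c = (2 * c + 1).choose (c + 1) := by
          have := Nat.choose_symm (n := 2 * c + 1) (k := c + 1) (by omega)
          have hd : 2 * c + 1 - (c + 1) = c := by omega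
          rw [hd] at this
          exact this
        rw [show 2 * c + 1 + 1 = (2 * c + 1) + 1 from rfl, Nat.choose_succ_succ, ← hsym]
    | n + 1 =>
      have hm : (1:ℤ) ≤ ((n:ℤ) + 1) := by omega
      have step : f ((n:ℤ) + 1) (b + 1) = f n b + f ((n:ℤ) + 2) b := by
        have := f_succ b ((n:ℤ) + 1) hm
        norm_num at this
        convert this using 3 <;> push_cast <;> ring
      push_cast
      rw [step, ih n]
      have e2 := ih (n + 2)
      push_cast at e2
      rw [e2]
      have i1 : (b + (n + 2) + 1) / 2 = (b + n + 1) / 2 + 1 := by omega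
      have i2 : (b + 1 + (n + 1) + 1) / 2 = (b + n + 1) / 2 + 1 := by omega
      rw [i1, i2, Nat.choose_succ_succ]

/-- Proposition 2 (odd case): for odd `b ≥ 1` and `0 ≤ m ≤ b`,
`f(m, b) = C(b, (b−1)/2 + (−1)^(m−1) ⌈m/2⌉)`. -/
theorem f_closed_form_odd (b : ℕ) (hb : 1 ≤ b) (hbo : Odd b)
    (m : ℤ) (hm0 : 0 ≤ m) (hmb : m ≤ (b : ℤ)) :
    (f m b : ℤ) =
      Nat.choose b ((((b : ℤ) - 1) / 2 + ((m - 1).negOnePow : ℤ) * ⌈(m : ℚ) / 2⌉).toNat) := by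

  obtain ⟨a, ha⟩ := hbo
  obtain ⟨n, rfl⟩ := Int.eq_ofNat_of_zero_le hm0
  have hn : n ≤ b := by exact_mod_cast hmb
  rw [f_formula b n]
  subst ha
  rcases Nat.even_or_odd n with ⟨c, hc⟩ | ⟨c, hc⟩
  · -- n even, n = 2c
    subst hc
    have hneg : ((((c:ℤ) + c) - 1).negOnePow : ℤ) = -1 := by
      rw [Int.negOnePow_odd _ ⟨c - 1, by ring⟩]
      simp
    have hceil : ⌈((c : ℚ) + c) / 2⌉ = (c : ℤ) := by
      rw [show ((c:ℚ) + c) / 2 = ((c:ℤ):ℚ) by push_cast; ring]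
      exact Int.ceil_intCast _
    push_cast
    rw [hneg, hceil]
    have hca : c ≤ a := by omega
    have harith : ((2 * (a:ℤ) + 1 - 1) / 2 + (-1) * c).toNat = a - c := by
      rw [show (2 * (a:ℤ) + 1 - 1) / 2 = a by omega]
      omega
    rw [harith]
    have hidx : (2 * a + 1 + (c + c) + 1) / 2 = a + c + 1 := by omega
    rw [hidx]
    have := Nat.choose_symm (n := 2 * a + 1) (k := a + c + 1) (by omega)
    rw [show 2 * a + 1 - (a + c + 1) = a - c by omega] at this
    exact_mod_cast this.symm
  · -- n odd, n = 2c+1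
    subst hc
    have hneg : ((((2 * c + 1 : ℕ):ℤ) - 1).negOnePow : ℤ) = 1 := by
      rw [Int.negOnePow_even _ ⟨c, by push_cast; ring⟩]
      simp
    have hhalf : ⌈(1/2 : ℚ)⌉ = 1 := by
      rw [Int.ceil_eq_iff] <;> norm_num
    have hceil : ⌈(2 * (c:ℚ) + 1) / 2⌉ = (c : ℤ) + 1 := by
      rw [show ((2 * (c:ℚ) + 1)) / 2 = 1/2 + ((c:ℤ):ℚ) by push_cast; ring]
      rw [Int.ceil_add_intCast, hhalf]; ring
    push_cast
    push_cast at hneg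
    rw [hneg, hceil]
    have harith : ((2 * (a:ℤ) + 1 - 1) / 2 + 1 * ((c:ℤ) + 1)).toNat = a + c + 1 := by
      rw [show (2 * (a:ℤ) + 1 - 1) / 2 = a by omega]
      omega
    rw [harith]
    have hidx : (2 * a + 1 + (2 * c + 1) + 1) / 2 = a + c + 1 := by omega
    rw [hidx]
end

section
/- For every even integer b ≥ 2, ∑_{m=0}^{b} m·f(m,b) = ∑_{i=1}^{b/2} (4i − 1)·C(b, b/2 − i), where C(n,k) denotes the binomial coefficient. -/
namespace WalkAux

variable {b : ℕ}

lemma stepVal_le_one (x : Bool) : stepVal x ≤ 1 := by cases x <;> simp [stepVal]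

lemma stepVal_not (x : Bool) : stepVal (!x) = - stepVal x := by cases x <;> simp [stepVal]

lemma partialSum_zero (ε : Fin b → Bool) : partialSum ε 0 = 0 := by simp [partialSum]

lemma partialSum_succ (ε : Fin b → Bool) {k : ℕ} (hk : k < b) :
    partialSum ε (k + 1) = partialSum ε k + stepVal (ε ⟨k, hk⟩) := by
  unfold partialSum
  have h : ∀ i : Fin b, (if (i : ℕ) < k + 1 then stepVal (ε i) else 0)
      = (if (i : ℕ) < k then stepVal (ε i) else 0)
        + (if i = (⟨k, hk⟩ : Fin b) then stepVal (ε i) else 0) := by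
    intro i
    rcases lt_trichotomy (i : ℕ) k with h1 | h1 | h1
    · rw [if_pos (by omega), if_pos h1, if_neg (by simp [Fin.ext_iff]; omega)]; ring
    · rw [if_pos (by omega), if_neg (by omega), if_pos (by simp [Fin.ext_iff, h1])]; ring
    · rw [if_neg (by omega), if_neg (by omega), if_neg (by simp [Fin.ext_iff]; omega)]; ring
  rw [Finset.sum_congr rfl (fun i _ => h i), Finset.sum_add_distrib]
  congr 1
  rw [Finset.sum_ite_eq' Finset.univ (⟨k, hk⟩ : Fin b) (fun i => stepVal (ε i))]
  simp

lemma partialSum_of_ge (ε : Fin b → Bool) {k : ℕ} (hk : b ≤ k) :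
    partialSum ε k = ∑ i : Fin b, stepVal (ε i) := by
  unfold partialSum
  exact Finset.sum_congr rfl fun i _ => if_pos (lt_of_lt_of_le i.isLt hk)

lemma partialSum_le (ε : Fin b → Bool) (k : ℕ) : partialSum ε k ≤ b := by
  unfold partialSum
  calc ∑ i : Fin b, (if (i : ℕ) < k then stepVal (ε i) else 0)
      ≤ ∑ _i : Fin b, (1 : ℤ) := by
        apply Finset.sum_le_sum
        intro i _
        split
        · exact stepVal_le_one _
        · norm_num
    _ = b := by simp

lemma walkMax_nonneg (ε : Fin b → Bool) : 0 ≤ walkMax ε := by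
  have := Finset.le_sup' (partialSum ε) (Finset.mem_range.2 (Nat.succ_pos b))
  rwa [partialSum_zero] at this

lemma le_walkMax (ε : Fin b → Bool) {k : ℕ} (hk : k ≤ b) : partialSum ε k ≤ walkMax ε :=
  Finset.le_sup' (partialSum ε) (Finset.mem_range.2 (by omega))

lemma walkMax_le (ε : Fin b → Bool) : walkMax ε ≤ b :=
  Finset.sup'_le _ _ fun k _ => partialSum_le ε k

lemma exists_walkMax (ε : Fin b → Bool) : ∃ k ≤ b, walkMax ε = partialSum ε k := by
  obtain ⟨k, hk, he⟩ := Finset.exists_mem_eq_sup' (Finset.nonempty_range_add_one) (partialSum ε)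
  exact ⟨k, by have := Finset.mem_range.1 hk; omega, he⟩

lemma exists_hit {m : ℤ} (hm : 1 ≤ m) {ε : Fin b → Bool} (hW : m ≤ walkMax ε) :
    ∃ k, k ≤ b ∧ partialSum ε k = m := by
  obtain ⟨k0, hk0b, hk0⟩ : ∃ k ≤ b, m ≤ partialSum ε k := by
    obtain ⟨k, hk, he⟩ := exists_walkMax ε
    exact ⟨k, hk, he ▸ hW⟩
  have hex : ∃ j, m ≤ partialSum ε j := ⟨k0, hk0⟩
  have hj := Nat.find_spec hex
  have hjle : Nat.find hex ≤ k0 := Nat.find_le hk0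
  rcases hn : Nat.find hex with _ | j'
  · rw [hn, partialSum_zero] at hj; omega
  · rw [hn] at hj hjle
    have hj' : ¬ m ≤ partialSum ε j' := Nat.find_min hex (by omega)
    have hj'b : j' < b := by omega
    have hs := partialSum_succ ε hj'b
    have hone := stepVal_le_one (ε ⟨j', hj'b⟩)
    exact ⟨j' + 1, by omega, by omega⟩


open Classical in
noncomputable def tau (m : ℤ) (ε : Fin b → Bool) : ℕ :=
  if h : ∃ k, partialSum ε k = m then Nat.find h else 0

noncomputable def reflectW (m : ℤ) (ε : Fin b → Bool) : Fin b → Bool :=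
  fun i => if (i : ℕ) < tau m ε then ε i else !(ε i)

lemma tau_spec {m : ℤ} {ε : Fin b → Bool} (h : ∃ k, partialSum ε k = m) :
    partialSum ε (tau m ε) = m := by
  rw [tau, dif_pos h]
  exact Nat.find_spec h

lemma tau_le {m : ℤ} {ε : Fin b → Bool} {k : ℕ} (h : partialSum ε k = m) : tau m ε ≤ k := by
  rw [tau, dif_pos ⟨k, h⟩]
  exact Nat.find_le h

lemma tau_min {m : ℤ} {ε : Fin b → Bool} (h : ∃ k, partialSum ε k = m) {j : ℕ}
    (hj : j < tau m ε) : partialSum ε j ≠ m := by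
  rw [tau, dif_pos h] at hj
  exact Nat.find_min h hj

lemma partialSum_reflect_of_le {m : ℤ} {ε : Fin b → Bool} {k : ℕ} (hk : k ≤ tau m ε) :
    partialSum (reflectW m ε) k = partialSum ε k := by
  unfold partialSum
  refine Finset.sum_congr rfl fun i _ => ?_
  by_cases hik : (i : ℕ) < k
  · rw [if_pos hik, if_pos hik, reflectW, if_pos (by omega)]
  · rw [if_neg hik, if_neg hik]

lemma partialSum_reflect_of_ge {m : ℤ} {ε : Fin b → Bool} (h : ∃ k, partialSum ε k = m)
    {k : ℕ} (hk : tau m ε ≤ k) :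
    partialSum (reflectW m ε) k = 2 * m - partialSum ε k := by
  have key : ∀ i : Fin b, (if (i : ℕ) < k then stepVal (reflectW m ε i) else 0)
      = 2 * (if (i : ℕ) < tau m ε then stepVal (ε i) else 0)
        - (if (i : ℕ) < k then stepVal (ε i) else 0) := by
    intro i
    by_cases h1 : (i : ℕ) < tau m ε
    · rw [if_pos (by omega), if_pos h1, if_pos (by omega), reflectW]
      simp only [h1, if_pos]
      ring
    · by_cases h2 : (i : ℕ) < k
      · rw [if_pos h2, if_neg h1, if_pos h2, reflectW]
        simp only [h1, if_neg, if_false, stepVal_not]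
        ring
      · rw [if_neg h2, if_neg h1, if_neg h2]; ring
  calc partialSum (reflectW m ε) k
      = ∑ i : Fin b, (2 * (if (i : ℕ) < tau m ε then stepVal (ε i) else 0)
        - (if (i : ℕ) < k then stepVal (ε i) else 0)) :=
        Finset.sum_congr rfl fun i _ => key i
    _ = 2 * partialSum ε (tau m ε) - partialSum ε k := by
        rw [Finset.sum_sub_distrib, ← Finset.mul_sum]; rfl
    _ = 2 * m - partialSum ε k := by rw [tau_spec h]

lemma reflect_hit {m : ℤ} {ε : Fin b → Bool} (h : ∃ k, partialSum ε k = m) :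
    partialSum (reflectW m ε) (tau m ε) = m :=
  (partialSum_reflect_of_le le_rfl).trans (tau_spec h)

lemma tau_reflect {m : ℤ} {ε : Fin b → Bool} (h : ∃ k, partialSum ε k = m) :
    tau m (reflectW m ε) = tau m ε := by
  have hit := reflect_hit h
  refine le_antisymm (tau_le hit) ?_
  by_contra hlt
  push_neg at hlt
  have h' : ∃ k, partialSum (reflectW m ε) k = m := ⟨_, hit⟩
  have := tau_spec h'
  rw [partialSum_reflect_of_le (le_of_lt hlt)] at this
  exact tau_min h hlt this

lemma reflect_reflect {m : ℤ} {ε : Fin b → Bool} (h : ∃ k, partialSum ε k = m) :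
    reflectW m (reflectW m ε) = ε := by
  funext i
  conv_lhs => rw [reflectW]
  rw [tau_reflect h]
  by_cases hi : (i : ℕ) < tau m ε <;> simp [reflectW, hi]


lemma card_reflect {m : ℤ} (hm : 1 ≤ m) :
    (Finset.univ.filter fun ε : Fin b → Bool => m ≤ walkMax ε ∧ partialSum ε b < m).card
      = (Finset.univ.filter fun ε : Fin b → Bool => m + 1 ≤ partialSum ε b).card := by
  refine Finset.card_nbij' (reflectW m) (reflectW m) ?_ ?_ ?_ ?_
  · intro ε hε
    rw [Finset.mem_coe, Finset.mem_filter] at hε ⊢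
    obtain ⟨-, hW, hSb⟩ := hε
    obtain ⟨k, hkb, hk⟩ := exists_hit hm hW
    have h : ∃ k, partialSum ε k = m := ⟨k, hk⟩
    have htau : tau m ε ≤ b := le_trans (tau_le hk) hkb
    have := partialSum_reflect_of_ge h htau
    exact ⟨Finset.mem_univ _, by omega⟩
  · intro ε hε
    rw [Finset.mem_coe, Finset.mem_filter] at hε ⊢
    obtain ⟨-, hSb⟩ := hε
    have hW : m ≤ walkMax ε := le_trans (by omega) (le_walkMax ε le_rfl)
    obtain ⟨k, hkb, hk⟩ := exists_hit hm hW
    have h : ∃ k, partialSum ε k = m := ⟨k, hk⟩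
    have htau : tau m ε ≤ b := le_trans (tau_le hk) hkb
    have h1 := partialSum_reflect_of_ge h htau
    have h2 : m ≤ walkMax (reflectW m ε) := by
      have := le_walkMax (reflectW m ε) htau
      rwa [reflect_hit h] at this
    exact ⟨Finset.mem_univ _, h2, by omega⟩
  · intro ε hε
    rw [Finset.mem_coe, Finset.mem_filter] at hε
    obtain ⟨-, hW, -⟩ := hε
    obtain ⟨k, hkb, hk⟩ := exists_hit hm hW
    exact reflect_reflect ⟨k, hk⟩
  · intro ε hε
    rw [Finset.mem_coe, Finset.mem_filter] at hε
    obtain ⟨-, hSb⟩ := hε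
    have hW : m ≤ walkMax ε := le_trans (by omega) (le_walkMax ε le_rfl)
    obtain ⟨k, hkb, hk⟩ := exists_hit hm hW
    exact reflect_reflect ⟨k, hk⟩

lemma G_eq {m : ℤ} (hm : 1 ≤ m) :
    (Finset.univ.filter fun ε : Fin b → Bool => m ≤ walkMax ε).card
      = (Finset.univ.filter fun ε : Fin b → Bool => m ≤ partialSum ε b).card
        + (Finset.univ.filter fun ε : Fin b → Bool => m + 1 ≤ partialSum ε b).card := by
  classical
  have hsplit := Finset.card_filter_add_card_filter_not
    (s := Finset.univ.filter fun ε : Fin b → Bool => m ≤ walkMax ε)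
    (p := fun ε => m ≤ partialSum ε b)
  rw [Finset.filter_filter, Finset.filter_filter] at hsplit
  have h1 : (Finset.univ.filter fun ε : Fin b → Bool =>
      m ≤ walkMax ε ∧ m ≤ partialSum ε b)
      = Finset.univ.filter fun ε : Fin b → Bool => m ≤ partialSum ε b := by
    apply Finset.filter_congr
    intro ε _
    constructor
    · exact fun h => h.2
    · exact fun h => ⟨le_trans h (le_walkMax ε le_rfl), h⟩
  have h2 : (Finset.univ.filter fun ε : Fin b → Bool =>
      m ≤ walkMax ε ∧ ¬ m ≤ partialSum ε b).card
      = (Finset.univ.filter fun ε : Fin b → Bool => m + 1 ≤ partialSum ε b).card := by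
    have e : (Finset.univ.filter fun ε : Fin b → Bool => m ≤ walkMax ε ∧ ¬ m ≤ partialSum ε b)
        = Finset.univ.filter fun ε : Fin b → Bool => m ≤ walkMax ε ∧ partialSum ε b < m := by
      apply Finset.filter_congr
      intro ε _
      rw [not_le]
    rw [e]
    exact card_reflect hm
  rw [h1, h2] at hsplit
  omega


def trues (ε : Fin b → Bool) : ℕ := (Finset.univ.filter fun i => ε i).card

lemma trues_le (ε : Fin b → Bool) : trues ε ≤ b := by
  have := Finset.card_filter_le Finset.univ (fun i => ε i = true)
  simpa [trues] using this

lemma card_trues_eq (t : ℕ) :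
    (Finset.univ.filter fun ε : Fin b → Bool => trues ε = t).card = b.choose t := by
  classical
  have : (Finset.univ.filter fun ε : Fin b → Bool => trues ε = t).card
      = (Finset.powersetCard t (Finset.univ : Finset (Fin b))).card := by
    refine Finset.card_nbij' (fun ε => Finset.univ.filter fun i => ε i)
      (fun s => fun i => decide (i ∈ s)) ?_ ?_ ?_ ?_
    · intro ε hε
      rw [Finset.mem_coe, Finset.mem_filter] at hε
      rw [Finset.mem_coe, Finset.mem_powersetCard]
      exact ⟨Finset.filter_subset _ _, hε.2⟩
    · intro s hs
      rw [Finset.mem_coe, Finset.mem_powersetCard] at hs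
      rw [Finset.mem_coe, Finset.mem_filter]
      refine ⟨Finset.mem_univ _, ?_⟩
      rw [trues]
      rw [show (Finset.univ.filter fun i => decide (i ∈ s) = true) = s from by ext i; simp]
      exact hs.2
    · intro ε _
      funext i
      simp
    · intro s _
      ext i
      simp
  rw [this, Finset.card_powersetCard]
  simp

lemma sum_steps (ε : Fin b → Bool) : partialSum ε b = 2 * (trues ε : ℤ) - b := by
  classical
  rw [partialSum_of_ge ε le_rfl]
  have h1 : ∑ i : Fin b, stepVal (ε i)
      = ∑ i : Fin b, (if ε i = true then (1 : ℤ) else -1) := by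
    refine Finset.sum_congr rfl fun i _ => ?_
    rw [stepVal]
  rw [h1, Finset.sum_ite, Finset.sum_const, Finset.sum_const]
  have h2 := Finset.card_filter_add_card_filter_not
    (s := (Finset.univ : Finset (Fin b))) (p := fun i => ε i = true)
  rw [Finset.card_univ, Fintype.card_fin] at h2
  rw [trues]
  simp only [nsmul_eq_mul, smul_eq_mul, mul_one, mul_neg_one]
  omega

lemma card_A (k : ℤ) :
    ((Finset.univ.filter fun ε : Fin b → Bool => k ≤ partialSum ε b).card : ℤ)
      = ∑ t ∈ Finset.range (b + 1),
          (if k ≤ 2 * (t : ℤ) - b then (b.choose t : ℤ) else 0) := by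
  classical
  have hmaps : ∀ ε ∈ (Finset.univ.filter fun ε : Fin b → Bool => k ≤ partialSum ε b),
      trues ε ∈ Finset.range (b + 1) := fun ε _ => Finset.mem_range.2 (by
        have := trues_le ε; omega)
  rw [Finset.card_eq_sum_card_fiberwise hmaps]
  push_cast
  refine Finset.sum_congr rfl fun t _ => ?_
  rw [Finset.filter_filter]
  by_cases hc : k ≤ 2 * (t : ℤ) - b
  · rw [if_pos hc]
    have e : (Finset.univ.filter fun ε : Fin b → Bool => k ≤ partialSum ε b ∧ trues ε = t)
        = Finset.univ.filter fun ε : Fin b → Bool => trues ε = t := by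
      apply Finset.filter_congr
      intro ε _
      constructor
      · exact fun h => h.2
      · intro h
        refine ⟨?_, h⟩
        rw [sum_steps, h]
        exact hc
    rw [e, card_trues_eq]
  · rw [if_neg hc]
    have e : (Finset.univ.filter fun ε : Fin b → Bool => k ≤ partialSum ε b ∧ trues ε = t)
        = (∅ : Finset (Fin b → Bool)) := by
      rw [Finset.filter_eq_empty_iff]
      intro ε _
      rintro ⟨h1, h2⟩
      rw [sum_steps, h2] at h1
      exact hc h1
    rw [e]
    simp


lemma sum_mf :
    ∑ m ∈ Finset.range (b + 1), (m : ℤ) * (f m b : ℤ) = ∑ ε : Fin b → Bool, walkMax ε := by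
  classical
  have hmaps : ∀ ε ∈ (Finset.univ : Finset (Fin b → Bool)),
      (walkMax ε).toNat ∈ Finset.range (b + 1) := by
    intro ε _
    rw [Finset.mem_range]
    have h1 := walkMax_le ε
    have h2 := walkMax_nonneg ε
    omega
  rw [← Finset.sum_fiberwise_of_maps_to hmaps (fun ε => walkMax ε)]
  refine Finset.sum_congr rfl fun m hm => ?_
  have e1 : ∀ ε ∈ Finset.univ.filter (fun ε : Fin b → Bool => (walkMax ε).toNat = m),
      walkMax ε = (m : ℤ) := by
    intro ε hε
    rw [Finset.mem_filter] at hε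
    have := walkMax_nonneg ε
    omega
  rw [Finset.sum_congr rfl e1, Finset.sum_const, nsmul_eq_mul]
  rw [mul_comm]
  congr 1
  rw [f]
  have e2 : (Finset.univ.filter fun ε : Fin b → Bool => walkMax ε = (m : ℤ))
      = Finset.univ.filter fun ε : Fin b → Bool => (walkMax ε).toNat = m := by
    apply Finset.filter_congr
    intro ε _
    have := walkMax_nonneg ε
    constructor
    · intro h; omega
    · intro h; omega
  rw [e2]

lemma sum_walkMax_eq :
    ∑ ε : Fin b → Bool, walkMax ε
      = ∑ m ∈ Finset.Icc 1 b,
          ((Finset.univ.filter fun ε : Fin b → Bool => (m : ℤ) ≤ walkMax ε).card : ℤ) := by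
  classical
  have h1 : ∀ ε : Fin b → Bool, walkMax ε
      = ∑ m ∈ Finset.Icc 1 b, (if (m : ℤ) ≤ walkMax ε then (1 : ℤ) else 0) := by
    intro ε
    rw [Finset.sum_boole]
    have e : (Finset.Icc 1 b).filter (fun m : ℕ => (m : ℤ) ≤ walkMax ε)
        = Finset.Icc 1 (walkMax ε).toNat := by
      ext m
      simp only [Finset.mem_filter, Finset.mem_Icc]
      have h1 := walkMax_le ε
      have h2 := walkMax_nonneg ε
      omega
    rw [e, Nat.card_Icc]
    have h2 := walkMax_nonneg ε
    omega
  rw [Finset.sum_congr rfl fun ε _ => h1 ε, Finset.sum_comm]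
  refine Finset.sum_congr rfl fun m _ => ?_
  rw [Finset.sum_boole]

end WalkAux

/-- For even `b ≥ 2`, `∑_{m=0}^{b} m·f(m,b) = ∑_{i=1}^{b/2} (4i − 1)·C(b, b/2 − i)`. -/
theorem sum_m_f_eq_binom_sum (b : ℕ) (hb : 2 ≤ b) (hbe : Even b) :
    ∑ m ∈ Finset.range (b + 1), (m : ℤ) * (f m b : ℤ)
      = ∑ i ∈ Finset.Icc 1 (b / 2), (4 * (i : ℤ) - 1) * (Nat.choose b (b / 2 - i) : ℤ) := by
  classical
  obtain ⟨h, hh⟩ := hbe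
  have hb2 : b / 2 = h := by omega
  rw [WalkAux.sum_mf, WalkAux.sum_walkMax_eq, hb2]
  have step1 : ∀ m ∈ Finset.Icc 1 b,
      ((Finset.univ.filter fun ε : Fin b → Bool => (m : ℤ) ≤ walkMax ε).card : ℤ)
        = ∑ t ∈ Finset.range (b + 1),
            ((if (m : ℤ) ≤ 2 * (t : ℤ) - b then (b.choose t : ℤ) else 0)
              + (if (m : ℤ) + 1 ≤ 2 * (t : ℤ) - b then (b.choose t : ℤ) else 0)) := by
    intro m hm
    rw [Finset.mem_Icc] at hm
    have hm1 : (1 : ℤ) ≤ (m : ℤ) := by exact_mod_cast hm.1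
    have hG := WalkAux.G_eq (b := b) hm1
    calc ((Finset.univ.filter fun ε : Fin b → Bool => (m : ℤ) ≤ walkMax ε).card : ℤ)
        = ((Finset.univ.filter fun ε : Fin b → Bool => (m : ℤ) ≤ partialSum ε b).card : ℤ)
          + ((Finset.univ.filter fun ε : Fin b → Bool => (m : ℤ) + 1 ≤ partialSum ε b).card : ℤ) := by
          exact_mod_cast congrArg (Nat.cast : ℕ → ℤ) hG
      _ = _ := by
          rw [WalkAux.card_A, WalkAux.card_A, ← Finset.sum_add_distrib]
  rw [Finset.sum_congr rfl step1, Finset.sum_comm]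
  have key : ∀ t ∈ Finset.range (b + 1),
      (∑ m ∈ Finset.Icc 1 b,
          ((if (m : ℤ) ≤ 2 * (t : ℤ) - b then (b.choose t : ℤ) else 0)
            + (if (m : ℤ) + 1 ≤ 2 * (t : ℤ) - b then (b.choose t : ℤ) else 0)))
        = (if h < t then (4 * (t : ℤ) - 4 * h - 1) * (b.choose t : ℤ) else 0) := by
    intro t ht
    rw [Finset.mem_range] at ht
    by_cases hht : h < t
    · rw [if_pos hht]
      rw [Finset.sum_add_distrib]
      have c1 : ∀ (c : ℕ), c ≤ b →
          (Finset.Icc 1 b).filter (fun m : ℕ => (m : ℤ) ≤ (c : ℤ)) = Finset.Icc 1 c := by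
        intro c hc
        ext m
        simp only [Finset.mem_filter, Finset.mem_Icc]
        omega
      have e1 : (∑ m ∈ Finset.Icc 1 b, (if (m : ℤ) ≤ 2 * (t : ℤ) - b then (b.choose t : ℤ) else 0))
          = (b.choose t : ℤ) * (2 * (t : ℤ) - 2 * h) := by
        have ef : (Finset.Icc 1 b).filter (fun m : ℕ => (m : ℤ) ≤ 2 * (t : ℤ) - b)
            = Finset.Icc 1 (2 * (t - h)) := by
          ext m
          simp only [Finset.mem_filter, Finset.mem_Icc]
          omega
        calc (∑ m ∈ Finset.Icc 1 b, (if (m : ℤ) ≤ 2 * (t : ℤ) - b then (b.choose t : ℤ) else 0))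
            = ∑ m ∈ Finset.Icc 1 b,
                (b.choose t : ℤ) * (if (m : ℤ) ≤ 2 * (t : ℤ) - b then (1 : ℤ) else 0) := by
              refine Finset.sum_congr rfl fun m _ => ?_
              split <;> ring
          _ = (b.choose t : ℤ) * ∑ m ∈ Finset.Icc 1 b, (if (m : ℤ) ≤ 2 * (t : ℤ) - b then (1 : ℤ) else 0) := by
              rw [Finset.mul_sum]
          _ = (b.choose t : ℤ) * (2 * (t : ℤ) - 2 * h) := by
              rw [Finset.sum_boole, ef, Nat.card_Icc]
              congr 1
              push_cast
              omega
      have e2 : (∑ m ∈ Finset.Icc 1 b, (if (m : ℤ) + 1 ≤ 2 * (t : ℤ) - b then (b.choose t : ℤ) else 0))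
          = (b.choose t : ℤ) * (2 * (t : ℤ) - 2 * h - 1) := by
        have ef : (Finset.Icc 1 b).filter (fun m : ℕ => (m : ℤ) + 1 ≤ 2 * (t : ℤ) - b)
            = Finset.Icc 1 (2 * (t - h) - 1) := by
          ext m
          simp only [Finset.mem_filter, Finset.mem_Icc]
          omega
        calc (∑ m ∈ Finset.Icc 1 b, (if (m : ℤ) + 1 ≤ 2 * (t : ℤ) - b then (b.choose t : ℤ) else 0))
            = ∑ m ∈ Finset.Icc 1 b,
                (b.choose t : ℤ) * (if (m : ℤ) + 1 ≤ 2 * (t : ℤ) - b then (1 : ℤ) else 0) := by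
              refine Finset.sum_congr rfl fun m _ => ?_
              split <;> ring
          _ = (b.choose t : ℤ) * ∑ m ∈ Finset.Icc 1 b, (if (m : ℤ) + 1 ≤ 2 * (t : ℤ) - b then (1 : ℤ) else 0) := by
              rw [Finset.mul_sum]
          _ = (b.choose t : ℤ) * (2 * (t : ℤ) - 2 * h - 1) := by
              rw [Finset.sum_boole, ef, Nat.card_Icc]
              congr 1
              push_cast
              omega
      rw [e1, e2]
      ring
    · rw [if_neg hht]
      apply Finset.sum_eq_zero
      intro m hm
      rw [Finset.mem_Icc] at hm
      rw [if_neg (by omega), if_neg (by omega)]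
      ring
  rw [Finset.sum_congr rfl key]
  have hsplit : Finset.range (b + 1)
      = Finset.range (h + 1) ∪ (Finset.Icc 1 h).image (fun i => h + i) := by
    ext t
    simp only [Finset.mem_union, Finset.mem_image, Finset.mem_range, Finset.mem_Icc]
    constructor
    · intro ht
      by_cases hc : t < h + 1
      · exact Or.inl hc
      · exact Or.inr ⟨t - h, by omega, by omega⟩
    · rintro (ht | ⟨i, hi, rfl⟩)
      · omega
      · omega
  have hdisj : Disjoint (Finset.range (h + 1)) ((Finset.Icc 1 h).image (fun i => h + i)) := by
    rw [Finset.disjoint_left]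
    intro t ht ht'
    rw [Finset.mem_range] at ht
    rw [Finset.mem_image] at ht'
    obtain ⟨i, hi, rfl⟩ := ht'
    rw [Finset.mem_Icc] at hi
    omega
  rw [hsplit, Finset.sum_union hdisj, Finset.sum_image (by intro x _ y _ hxy; simp only at hxy; omega)]
  have z1 : (∑ t ∈ Finset.range (h + 1),
      (if h < t then (4 * (t : ℤ) - 4 * h - 1) * (b.choose t : ℤ) else 0)) = 0 := by
    apply Finset.sum_eq_zero
    intro t ht
    rw [Finset.mem_range] at ht
    rw [if_neg (by omega)]
  rw [z1, zero_add]
  refine Finset.sum_congr rfl fun i hi => ?_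
  rw [Finset.mem_Icc] at hi
  rw [if_pos (by omega)]
  have hcs : b.choose (h + i) = b.choose (h - i) := by
    have h1 : h + i ≤ b := by omega
    have := Nat.choose_symm h1
    rw [show b - (h + i) = h - i from by omega] at this
    omega
  rw [hcs]
  push_cast
  ring
end
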